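/- The function r ↦ ∑_{k=0}^{r} 2^{-k}·C(n,k)·C(m,r-k)/C(m+n,r) is monotonically non-increasing in r for 0 ≤ r ≤ m+n (fixed m, n). -/
import Mathlib

open Finset

lemma aux_choose (a j : ℕ) : (a.choose (j+1) : ℝ) * (j+1) = (a.choose j : ℝ) * ((a:ℝ) - j) := by
  rcases le_or_gt j a with h | h
  · have h1 := Nat.choose_succ_right_eq a j
    have h2 := congrArg (Nat.cast : ℕ → ℝ) h1
    push_cast [h] at h2
    linarith
  · rw [Nat.choose_eq_zero_of_lt h, Nat.choose_eq_zero_of_lt (by omega)]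
    simp

lemma step_ineq (m n r : ℕ) (hr : r < m + n) :
    (∑ k ∈ Finset.range (r + 1 + 1),
        (2 : ℝ) ^ (-(k : ℝ)) * (n.choose k * m.choose (r + 1 - k) : ℝ)
          / ((m + n).choose (r + 1) : ℝ))
      ≤ ∑ k ∈ Finset.range (r + 1),
          (2 : ℝ) ^ (-(k : ℝ)) * (n.choose k * m.choose (r - k) : ℝ)
            / ((m + n).choose r : ℝ) := by
  have hC0 : (0:ℝ) < ((m+n).choose r : ℝ) := by
    exact_mod_cast Nat.choose_pos hr.le
  have hC1 : (0:ℝ) < ((m+n).choose (r+1) : ℝ) := by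
    exact_mod_cast Nat.choose_pos hr
  rw [← Finset.sum_div, ← Finset.sum_div, div_le_div_iff₀ hC1 hC0]
  set S1 := ∑ k ∈ Finset.range (r + 1 + 1),
      (2 : ℝ) ^ (-(k : ℝ)) * (n.choose k * m.choose (r + 1 - k) : ℝ) with hS1
  set S0 := ∑ k ∈ Finset.range (r + 1),
      (2 : ℝ) ^ (-(k : ℝ)) * (n.choose k * m.choose (r - k) : ℝ) with hS0
  have hD : ((m+n).choose (r+1) : ℝ) * ((r:ℝ)+1) = ((m+n).choose r : ℝ) * ((m:ℝ)+(n:ℝ)-(r:ℝ)) := by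
    have := aux_choose (m+n) r
    push_cast at this
    linarith
  have key : S1 * ((r:ℝ)+1) ≤ S0 * ((m:ℝ)+(n:ℝ)-(r:ℝ)) := by
    rw [hS1, hS0, Finset.sum_mul, Finset.sum_mul]
    have hsplit : ∀ k ∈ Finset.range (r+1+1),
        (2 : ℝ) ^ (-(k : ℝ)) * (n.choose k * m.choose (r + 1 - k) : ℝ) * ((r:ℝ)+1)
        = (2 : ℝ) ^ (-(k : ℝ)) * (n.choose k : ℝ) * (m.choose (r + 1 - k) : ℝ) * (((r:ℝ)+1)-(k:ℝ))
          + (2 : ℝ) ^ (-(k : ℝ)) * (n.choose k : ℝ) * (m.choose (r + 1 - k) : ℝ) * (k:ℝ) := by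
      intro k _
      push_cast
      ring
    rw [Finset.sum_congr rfl hsplit, Finset.sum_add_distrib]
    have hA : ∑ k ∈ Finset.range (r+1+1),
        (2 : ℝ) ^ (-(k : ℝ)) * (n.choose k : ℝ) * (m.choose (r + 1 - k) : ℝ) * (((r:ℝ)+1)-(k:ℝ))
        = ∑ k ∈ Finset.range (r+1),
          (2 : ℝ) ^ (-(k : ℝ)) * (n.choose k : ℝ) * (m.choose (r - k) : ℝ) * ((m:ℝ)-((r - k : ℕ):ℝ)) := by
      rw [Finset.sum_range_succ]
      simp only [Nat.cast_add, Nat.cast_one, sub_self, mul_zero, add_zero]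
      refine Finset.sum_congr rfl ?_
      intro k hk
      have hk' : k ≤ r := by simpa [Nat.lt_succ_iff] using hk
      have h1 : r + 1 - k = (r - k) + 1 := by omega
      have h2 : ((r:ℝ)+1)-(k:ℝ) = ((r - k : ℕ):ℝ) + 1 := by
        push_cast [hk']
        ring
      rw [h1, h2]
      have hx := aux_choose m (r - k)
      linear_combination ((2:ℝ) ^ (-(k:ℝ)) * (n.choose k : ℝ)) * hx
    have hB : ∑ k ∈ Finset.range (r+1+1),
        (2 : ℝ) ^ (-(k : ℝ)) * (n.choose k : ℝ) * (m.choose (r + 1 - k) : ℝ) * (k:ℝ)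
        = ∑ k ∈ Finset.range (r+1),
          (1/2) * ((2 : ℝ) ^ (-(k : ℝ)) * (n.choose k : ℝ) * ((n:ℝ)-(k:ℝ)) * (m.choose (r - k) : ℝ)) := by
      rw [Finset.sum_range_succ']
      simp only [Nat.cast_zero, mul_zero, add_zero]
      refine Finset.sum_congr rfl ?_
      intro k hk
      have h1 : r + 1 - (k + 1) = r - k := by omega
      have h2 : (2:ℝ) ^ (-((k+1 : ℕ) : ℝ)) = (2:ℝ) ^ (-(k:ℝ)) * (2:ℝ)^(-(1:ℝ)) := by
        push_cast
        rw [← Real.rpow_add (by norm_num)]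
        ring_nf
      have h3 : (2:ℝ)^(-(1:ℝ)) = 1/2 := by
        rw [Real.rpow_neg_one]
        norm_num
      rw [h1, h2, h3]
      have h4 := aux_choose n k
      push_cast
      linear_combination ((2:ℝ) ^ (-(k:ℝ)) * (1/2) * (m.choose (r - k) : ℝ)) * h4
    rw [hA, hB]
    rw [← Finset.sum_add_distrib]
    refine Finset.sum_le_sum ?_
    intro k hk
    have hk' : k ≤ r := by simpa [Nat.lt_succ_iff] using hk
    have h2k : (0:ℝ) < (2 : ℝ) ^ (-(k : ℝ)) := Real.rpow_pos_of_pos (by norm_num) _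
    rcases le_or_gt k n with hkn | hkn
    · have hc : ((r - k : ℕ):ℝ) = (r:ℝ) - (k:ℝ) := by push_cast [hk']; ring
      rw [hc]
      have e1 : (0:ℝ) ≤ (2 : ℝ) ^ (-(k : ℝ)) * (n.choose k : ℝ) * (m.choose (r - k) : ℝ) := by positivity
      have e2 : (0:ℝ) ≤ (n:ℝ) - (k:ℝ) := by
        have : (k:ℝ) ≤ (n:ℝ) := by exact_mod_cast hkn
        linarith
      push_cast
      nlinarith [mul_nonneg e1 e2]
    · rw [Nat.choose_eq_zero_of_lt hkn]
      push_cast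
      simp
  have h2 := mul_le_mul_of_nonneg_right key hC0.le
  have hr1 : (0:ℝ) < (r:ℝ) + 1 := by positivity
  have h3 : S0 * ((m:ℝ)+(n:ℝ)-(r:ℝ)) * ((m+n).choose r : ℝ)
      = S0 * ((m+n).choose (r+1) : ℝ) * ((r:ℝ)+1) := by
    linear_combination (-S0) * hD
  rw [h3] at h2
  have h4 : S1 * ((r:ℝ)+1) * ((m+n).choose r : ℝ)
      = S1 * ((m+n).choose r : ℝ) * ((r:ℝ)+1) := by ring
  rw [h4] at h2
  exact le_of_mul_le_mul_right h2 hr1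

theorem stmt10 (m n : ℕ) (r₁ r₂ : ℕ) (h12 : r₁ ≤ r₂) (h2 : r₂ ≤ m + n) :
    (∑ k ∈ Finset.range (r₂ + 1),
        (2 : ℝ) ^ (-(k : ℝ)) * (n.choose k * m.choose (r₂ - k) : ℝ)
          / ((m + n).choose r₂ : ℝ))
      ≤ ∑ k ∈ Finset.range (r₁ + 1),
          (2 : ℝ) ^ (-(k : ℝ)) * (n.choose k * m.choose (r₁ - k) : ℝ)
            / ((m + n).choose r₁ : ℝ) := by
  induction r₂, h12 using Nat.le_induction with
  | base => exact le_refl _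
  | succ r hr ih =>
      have hlt : r < m + n := by omega
      exact le_trans (step_ineq m n r hlt) (ih (by omega))
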